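/- Let H be a real Hilbert space and let n ≥ 2. For each i ∈ {1,…,n}, let F_i : H → H be τ_i-cocoercive (τ_i > 0) and let (x_{i,k})_k be a sequence in H. Suppose there exist ρ₁,…,ρ_n > 0 such that the balance condition (Σ_{i=1}^n ρ_iτ_i)/(Σ_{i=1}^n ρ_i) ≥ 1 holds, and suppose that: (a) for each i, x_{i,k} ⇀ x_i; (b) for each i, F_i(x_{i,k}) ⇀ y; (c) Σ_{i=1}^n ρ_i(x_{i,k} − F_i(x_{i,k})) → −(Σ_{i=1}^n ρ_i)y + Σ_{i=1}^n ρ_ix_i strongly; (d) for all i, j, F_i(x_{i,k}) − F_j(x_{j,k}) → 0 strongly. Then F₁(x₁) = F₂(x₂) = ⋯ = F_n(x_n) = y. -/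

import Mathlib

open scoped InnerProductSpace
open Filter

lemma bdd_of_weak' {H : Type*} [NormedAddCommGroup H] [InnerProductSpace ℝ H] [CompleteSpace H]
    (v : ℕ → H) (l : H) (h : ∀ u : H, Tendsto (fun k => ⟪v k, u⟫_ℝ) atTop (nhds ⟪l, u⟫_ℝ)) :
    ∃ C, ∀ k, ‖v k‖ ≤ C := by
  have hb : ∀ u : H, ∃ C, ∀ k, ‖(innerSL ℝ (v k)) u‖ ≤ C := by
    intro u
    obtain ⟨C, hC⟩ := (h u).norm.bddAbove_range
    exact ⟨C, fun k => hC ⟨k, rfl⟩⟩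
  obtain ⟨C, hC⟩ := banach_steinhaus hb
  refine ⟨C, fun k => ?_⟩
  have := hC k
  rwa [innerSL_apply_norm] at this

/-- Demiclosedness principle for balanced cocoercive operators. -/
theorem demiclosedness_balanced_cocoercive {H : Type*} [NormedAddCommGroup H]
    [InnerProductSpace ℝ H] [CompleteSpace H] (n : ℕ) (hn : 2 ≤ n)
    (τ : Fin n → ℝ) (hτ : ∀ i, 0 < τ i)
    (F : Fin n → H → H)
    (hF : ∀ i, ∀ x y : H, ⟪x - y, F i x - F i y⟫_ℝ ≥ τ i * ‖F i x - F i y‖ ^ 2)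
    (ρ : Fin n → ℝ) (hρ : ∀ i, 0 < ρ i)
    (hbal : (∑ i, ρ i * τ i) / (∑ i, ρ i) ≥ 1)
    (x : Fin n → ℕ → H) (xl : Fin n → H) (y : H)
    (ha : ∀ i, ∀ u : H,
      Filter.Tendsto (fun k => ⟪x i k, u⟫_ℝ) Filter.atTop (nhds ⟪xl i, u⟫_ℝ))
    (hb : ∀ i, ∀ u : H,
      Filter.Tendsto (fun k => ⟪F i (x i k), u⟫_ℝ) Filter.atTop (nhds ⟪y, u⟫_ℝ))
    (hc : Filter.Tendsto (fun k => ∑ i, ρ i • (x i k - F i (x i k)))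
      Filter.atTop (nhds ((-(∑ i, ρ i)) • y + ∑ i, ρ i • xl i)))
    (hd : ∀ i j, Filter.Tendsto (fun k => F i (x i k) - F j (x j k))
      Filter.atTop (nhds 0)) :
    ∀ i, F i (xl i) = y := by
  classical
  have hn0 : 0 < n := by omega
  set i0 : Fin n := ⟨0, hn0⟩ with hi0
  set a : Fin n → ℕ → H := fun i k => x i k - xl i with haa
  set b : Fin n → ℕ → H := fun i k => F i (x i k) - y with hbb
  set c : Fin n → H := fun i => y - F i (xl i) with hcc
  set d : Fin n → ℕ → H := fun i k => b i k - b i0 k with hdd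
  set e : ℕ → H := fun k => ∑ i, ρ i • (a i k - b i k) with hee
  have haeq : ∀ i k, a i k = x i k - xl i := fun _ _ => rfl
  have hbeq : ∀ i k, b i k = F i (x i k) - y := fun _ _ => rfl
  have hceq : ∀ i, c i = y - F i (xl i) := fun _ => rfl
  have hdeq : ∀ i k, d i k = b i k - b i0 k := fun _ _ => rfl
  have heeq : ∀ k, e k = ∑ i, ρ i • (a i k - b i k) := fun _ => rfl
  clear_value a b c d e
  clear haa hbb hcc hdd hee
  -- weak convergence to 0
  have haw : ∀ i (u : H), Tendsto (fun k => ⟪a i k, u⟫_ℝ) atTop (nhds 0) := by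
    intro i u
    have := (ha i u).sub_const ⟪xl i, u⟫_ℝ
    simpa [haeq, inner_sub_left] using this
  have hbw : ∀ i (u : H), Tendsto (fun k => ⟪b i k, u⟫_ℝ) atTop (nhds 0) := by
    intro i u
    have := (hb i u).sub_const ⟪y, u⟫_ℝ
    simpa [hbeq, inner_sub_left] using this
  -- bounds
  have hbd_a : ∀ i, ∃ C, ∀ k, ‖a i k‖ ≤ C := by
    intro i
    refine bdd_of_weak' (a i) 0 (fun u => ?_)
    simpa using haw i u
  have hbd_b : ∀ i, ∃ C, ∀ k, ‖b i k‖ ≤ C := by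
    intro i
    refine bdd_of_weak' (b i) 0 (fun u => ?_)
    simpa using hbw i u
  choose Ca hCa using hbd_a
  choose Cb hCb using hbd_b
  -- e → 0
  have he0 : Tendsto e atTop (nhds 0) := by
    have h1 := (hc.sub_const (∑ i, ρ i • xl i)).add_const ((∑ i, ρ i) • y)
    have heq : (fun k => (∑ i, ρ i • (x i k - F i (x i k))) - (∑ i, ρ i • xl i)
        + (∑ i, ρ i) • y) = e := by
      funext k
      rw [heeq, Finset.sum_smul, ← Finset.sum_sub_distrib, ← Finset.sum_add_distrib]
      refine Finset.sum_congr rfl fun i _ => ?_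
      simp only [haeq, hbeq, smul_sub]
      abel
    have hl : ((-(∑ i, ρ i)) • y + ∑ i, ρ i • xl i) - (∑ i, ρ i • xl i)
        + (∑ i, ρ i) • y = 0 := by
      rw [neg_smul]; abel
    rw [heq, hl] at h1
    exact h1
  -- d → 0 in norm
  have hd0 : ∀ i, Tendsto (fun k => ‖d i k‖) atTop (nhds 0) := by
    intro i
    have h1 := (hd i i0).norm
    have heq : (fun k => ‖F i (x i k) - F i0 (x i0 k)‖) = fun k => ‖d i k‖ := by
      funext k
      congr 1
      simp only [hdeq, hbeq]
      abel
    rw [heq] at h1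
    simpa using h1
  -- positivity of sums
  have hρsum : 0 < ∑ i, ρ i :=
    Finset.sum_pos (fun i _ => hρ i) ⟨i0, Finset.mem_univ _⟩
  have hbal' : (∑ i, ρ i) ≤ ∑ i, ρ i * τ i := by
    rw [ge_iff_le, le_div_iff₀ hρsum, one_mul] at hbal
    exact hbal
  -- main quantities
  set T : ℝ := ∑ i, ρ i * τ i * ‖c i‖ ^ 2 with hT
  set A : ℕ → ℝ := fun k => ∑ i, ρ i * (⟪a i k, c i⟫_ℝ - 2 * τ i * ⟪b i k, c i⟫_ℝ) with hA
  set R : ℕ → ℝ := fun k =>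
    (∑ i, ρ i * (Ca i + Cb i0 + τ i * (Cb i + Cb i0)) * ‖d i k‖) + Cb i0 * ‖e k‖ with hR
  have hAeq : ∀ k, A k = ∑ i, ρ i * (⟪a i k, c i⟫_ℝ - 2 * τ i * ⟪b i k, c i⟫_ℝ) :=
    fun _ => rfl
  have hReq : ∀ k, R k =
    (∑ i, ρ i * (Ca i + Cb i0 + τ i * (Cb i + Cb i0)) * ‖d i k‖) + Cb i0 * ‖e k‖ :=
    fun _ => rfl
  clear_value T A R
  -- Step 1: T ≤ A k + B k  where B k is the bilinear part
  have key1 : ∀ k, T ≤ A k +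
      ((∑ i, ρ i * ⟪a i k, b i k⟫_ℝ) - ∑ i, ρ i * τ i * ‖b i k‖ ^ 2) := by
    intro k
    have hsum : A k + ((∑ i, ρ i * ⟪a i k, b i k⟫_ℝ) - ∑ i, ρ i * τ i * ‖b i k‖ ^ 2) - T
        = ∑ i, ρ i * (⟪a i k, b i k + c i⟫_ℝ - τ i * ‖b i k + c i‖ ^ 2) := by
      rw [hAeq, hT]
      rw [← Finset.sum_sub_distrib, ← Finset.sum_add_distrib, ← Finset.sum_sub_distrib]
      refine Finset.sum_congr rfl fun i _ => ?_
      rw [norm_add_sq_real, inner_add_right]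
      ring
    have hpos : 0 ≤ ∑ i, ρ i * (⟪a i k, b i k + c i⟫_ℝ - τ i * ‖b i k + c i‖ ^ 2) := by
      refine Finset.sum_nonneg fun i _ => mul_nonneg (hρ i).le ?_
      have h3 : b i k + c i = F i (x i k) - F i (xl i) := by
        rw [hbeq, hceq]; abel
      have h2 : a i k = x i k - xl i := haeq i k
      have h4 := hF i (x i k) (xl i)
      rw [h2, h3]
      linarith [h4]
    have h5 := hpos
    rw [← hsum] at h5
    linarith
  -- Step 2: the sum identity
  have hS1 : ∀ k, (∑ i, ρ i * ⟪a i k, b i k⟫_ℝ) - ⟪e k, b i0 k⟫_ℝ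
      = ∑ i, ρ i * (⟪a i k, d i k⟫_ℝ + ⟪d i k, b i0 k⟫_ℝ + ‖b i0 k‖ ^ 2) := by
    intro k
    rw [heeq, sum_inner, ← Finset.sum_sub_distrib]
    refine Finset.sum_congr rfl fun i _ => ?_
    have hb' : b i k = d i k + b i0 k := by rw [hdeq i k]; abel
    rw [real_inner_smul_left, inner_sub_left, hb', inner_add_right, inner_add_left,
      real_inner_self_eq_norm_sq]
    ring
  -- Step 3: B k ≤ R k
  have key2 : ∀ k, ((∑ i, ρ i * ⟪a i k, b i k⟫_ℝ) - ∑ i, ρ i * τ i * ‖b i k‖ ^ 2) ≤ R k := by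
    intro k
    have hS := hS1 k
    have hterm : ∀ i : Fin n,
        ρ i * (⟪a i k, d i k⟫_ℝ + ⟪d i k, b i0 k⟫_ℝ + ‖b i0 k‖ ^ 2) - ρ i * τ i * ‖b i k‖ ^ 2
        ≤ ρ i * (Ca i + Cb i0 + τ i * (Cb i + Cb i0)) * ‖d i k‖
          + ρ i * ‖b i0 k‖ ^ 2 - ρ i * τ i * ‖b i0 k‖ ^ 2 := by
      intro i
      have h1 : ⟪a i k, d i k⟫_ℝ ≤ Ca i * ‖d i k‖ := by
        calc ⟪a i k, d i k⟫_ℝ ≤ ‖a i k‖ * ‖d i k‖ := real_inner_le_norm _ _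
        _ ≤ Ca i * ‖d i k‖ := mul_le_mul_of_nonneg_right (hCa i k) (norm_nonneg _)
      have h2 : ⟪d i k, b i0 k⟫_ℝ ≤ Cb i0 * ‖d i k‖ := by
        calc ⟪d i k, b i0 k⟫_ℝ ≤ ‖d i k‖ * ‖b i0 k‖ := real_inner_le_norm _ _
        _ ≤ ‖d i k‖ * Cb i0 := mul_le_mul_of_nonneg_left (hCb i0 k) (norm_nonneg _)
        _ = Cb i0 * ‖d i k‖ := by ring
      have h3 : ‖b i0 k‖ ^ 2 ≤ ‖b i k‖ ^ 2 + (Cb i + Cb i0) * ‖d i k‖ := by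
        have hdn : ‖b i0 k‖ - ‖b i k‖ ≤ ‖d i k‖ := by
          have h6 := norm_sub_norm_le (b i0 k) (b i k)
          have hrev : ‖b i0 k - b i k‖ = ‖d i k‖ := by
            rw [hdeq i k]; exact (norm_sub_rev _ _)
          linarith
        have hb1 := hCb i k
        have hb0 := hCb i0 k
        have hn1 : (0:ℝ) ≤ ‖b i0 k‖ + ‖b i k‖ := by positivity
        have hm1 : 0 ≤ (‖d i k‖ - (‖b i0 k‖ - ‖b i k‖)) * (‖b i0 k‖ + ‖b i k‖) :=
          mul_nonneg (by linarith) hn1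
        have hm2 : 0 ≤ ((Cb i + Cb i0) - (‖b i0 k‖ + ‖b i k‖)) * ‖d i k‖ :=
          mul_nonneg (by linarith) (norm_nonneg _)
        nlinarith [hm1, hm2]
      have hτi := (hτ i).le
      have hρi := (hρ i).le
      have h4 : τ i * ‖b i0 k‖ ^ 2 ≤ τ i * ‖b i k‖ ^ 2 + τ i * ((Cb i + Cb i0) * ‖d i k‖) := by
        nlinarith [mul_le_mul_of_nonneg_left h3 hτi]
      nlinarith [mul_le_mul_of_nonneg_left h4 hρi, mul_le_mul_of_nonneg_left h1 hρi,
        mul_le_mul_of_nonneg_left h2 hρi]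
    have hsum2 : ∑ i, (ρ i * (⟪a i k, d i k⟫_ℝ + ⟪d i k, b i0 k⟫_ℝ + ‖b i0 k‖ ^ 2)
        - ρ i * τ i * ‖b i k‖ ^ 2)
        ≤ ∑ i, (ρ i * (Ca i + Cb i0 + τ i * (Cb i + Cb i0)) * ‖d i k‖
          + ρ i * ‖b i0 k‖ ^ 2 - ρ i * τ i * ‖b i0 k‖ ^ 2) :=
      Finset.sum_le_sum fun i _ => hterm i
    have he1 : ⟪e k, b i0 k⟫_ℝ ≤ Cb i0 * ‖e k‖ := by
      calc ⟪e k, b i0 k⟫_ℝ ≤ ‖e k‖ * ‖b i0 k‖ := real_inner_le_norm _ _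
      _ ≤ ‖e k‖ * Cb i0 := mul_le_mul_of_nonneg_left (hCb i0 k) (norm_nonneg _)
      _ = Cb i0 * ‖e k‖ := by ring
    have hnp : ((∑ i, ρ i) - (∑ i, ρ i * τ i)) * ‖b i0 k‖ ^ 2 ≤ 0 :=
      mul_nonpos_of_nonpos_of_nonneg (by linarith) (by positivity)
    have expand1 : ∑ i, (ρ i * (⟪a i k, d i k⟫_ℝ + ⟪d i k, b i0 k⟫_ℝ + ‖b i0 k‖ ^ 2)
        - ρ i * τ i * ‖b i k‖ ^ 2)
        = (∑ i, ρ i * (⟪a i k, d i k⟫_ℝ + ⟪d i k, b i0 k⟫_ℝ + ‖b i0 k‖ ^ 2))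
          - ∑ i, ρ i * τ i * ‖b i k‖ ^ 2 := Finset.sum_sub_distrib _ _
    have expand2 : ∑ i, (ρ i * (Ca i + Cb i0 + τ i * (Cb i + Cb i0)) * ‖d i k‖
          + ρ i * ‖b i0 k‖ ^ 2 - ρ i * τ i * ‖b i0 k‖ ^ 2)
        = (∑ i, ρ i * (Ca i + Cb i0 + τ i * (Cb i + Cb i0)) * ‖d i k‖)
          + (∑ i, ρ i) * ‖b i0 k‖ ^ 2 - (∑ i, ρ i * τ i) * ‖b i0 k‖ ^ 2 := by
      rw [Finset.sum_sub_distrib, Finset.sum_add_distrib, Finset.sum_mul, Finset.sum_mul]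
    rw [expand1, expand2] at hsum2
    rw [hReq]
    linarith [hsum2, he1, hnp, hS]
  -- Step 4: limits
  have hA0 : Tendsto A atTop (nhds 0) := by
    have h0 : Tendsto (fun k => ∑ i, ρ i * (⟪a i k, c i⟫_ℝ - 2 * τ i * ⟪b i k, c i⟫_ℝ))
        atTop (nhds (∑ i : Fin n, (0:ℝ))) := by
      refine tendsto_finset_sum _ fun i _ => ?_
      have h1 : Tendsto (fun k => ρ i * (⟪a i k, c i⟫_ℝ - 2 * τ i * ⟪b i k, c i⟫_ℝ))
          atTop (nhds (ρ i * (0 - 2 * τ i * 0))) :=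
        ((haw i (c i)).sub ((hbw i (c i)).const_mul (2 * τ i))).const_mul (ρ i)
      simpa using h1
    have hfe : (fun k => ∑ i, ρ i * (⟪a i k, c i⟫_ℝ - 2 * τ i * ⟪b i k, c i⟫_ℝ)) = A := by
      funext k; exact (hAeq k).symm
    rw [hfe] at h0
    simpa using h0
  have hR0 : Tendsto R atTop (nhds 0) := by
    have h1 : Tendsto (fun k => ∑ i, ρ i * (Ca i + Cb i0 + τ i * (Cb i + Cb i0)) * ‖d i k‖)
        atTop (nhds (∑ i : Fin n, (0:ℝ))) := by
      refine tendsto_finset_sum _ fun i _ => ?_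
      simpa using (hd0 i).const_mul (ρ i * (Ca i + Cb i0 + τ i * (Cb i + Cb i0)))
    have h2 : Tendsto (fun k => Cb i0 * ‖e k‖) atTop (nhds (Cb i0 * ‖(0:H)‖)) :=
      he0.norm.const_mul _
    have h3 := h1.add h2
    have hfe : (fun k => (∑ i, ρ i * (Ca i + Cb i0 + τ i * (Cb i + Cb i0)) * ‖d i k‖)
        + Cb i0 * ‖e k‖) = R := by
      funext k; exact (hReq k).symm
    rw [hfe] at h3
    simpa using h3
  -- Step 5: conclude T ≤ 0
  have hTle : T ≤ 0 := by
    have hlim : Tendsto (fun k => A k + R k) atTop (nhds 0) := by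
      simpa using hA0.add hR0
    refine ge_of_tendsto' hlim fun k => ?_
    have h6 := key1 k
    have h7 := key2 k
    linarith
  -- Step 6: each term zero
  have hnonneg : ∀ i ∈ Finset.univ, (0:ℝ) ≤ ρ i * τ i * ‖c i‖ ^ 2 := fun i _ =>
    mul_nonneg (mul_nonneg (hρ i).le (hτ i).le) (by positivity)
  have hsum0 : T = 0 := le_antisymm hTle (hT ▸ Finset.sum_nonneg hnonneg)
  rw [hT] at hsum0
  intro i
  have hz := (Finset.sum_eq_zero_iff_of_nonneg hnonneg).mp hsum0 i (Finset.mem_univ i)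
  have hne : ρ i * τ i ≠ 0 := (mul_pos (hρ i) (hτ i)).ne'
  have hc0 : ‖c i‖ ^ 2 = 0 := by
    rcases mul_eq_zero.mp hz with h | h
    · exact absurd h hne
    · exact h
  have hcz : c i = 0 := by
    have := pow_eq_zero_iff (n := 2) (by norm_num) |>.mp hc0
    simpa using this
  have h5 : y - F i (xl i) = 0 := by rw [← hceq i]; exact hcz
  exact (sub_eq_zero.mp h5).symm
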